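/- Let (X,d) be a metric space of diameter at most 1, μ a Borel measure on X, and let D > 0, C₀ > 0 be reals such that μ(B(x,r)) ≤ C₀·r^D for every x ∈ X and r > 0, where B(x,r) denotes the open ball of radius r about x. Let p ∈ (1,∞), s ∈ (0,1) with s·(D+1) > D/p, let C₁ > 0, and let K : X × X → ℝ be a measurable function with |K(x,y)| ≤ C₁·d(x,y)^(s(D+1)−D) for all x,y ∈ X. Then there is a constant C > 0 depending only on D, p, s, C₀ and C₁ such that for every f ∈ L^p(X,μ) and every x ∈ X, ∫_X |K(x,y)·f(y)| dμ(y) ≤ C·‖f‖_{L^p(μ)}. -/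

import Mathlib

open MeasureTheory Real
open scoped ENNReal

lemma riesz_lintegral_bound {X : Type*} [MetricSpace X] [MeasurableSpace X] [BorelSpace X]
    (hdiam : ∀ x y : X, dist x y ≤ 1) {D C₀ : ℝ} (hD : 0 < D) (hC₀ : 0 < C₀)
    (β : ℝ) (hβD : max (-β) 0 < D)
    (μ : Measure X)
    (hμ : ∀ (x : X) (r : ℝ), 0 < r → μ (Metric.ball x r) ≤ ENNReal.ofReal (C₀ * r ^ D))
    (x : X) :
    ∫⁻ y, ENNReal.ofReal (dist x y ^ β) ∂μ ≤
      ENNReal.ofReal (C₀ * 2 ^ (D + max (-β) 0)) *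
        (1 - ENNReal.ofReal ((2:ℝ) ^ (max (-β) 0 - D)))⁻¹ := by
  set γ := max (-β) 0 with hγ
  have hγ0 : 0 ≤ γ := le_max_right _ _
  have h2 : (0:ℝ) < 2 := two_pos
  -- half powers
  have hrpos : ∀ n : ℕ, (0:ℝ) < (1/2:ℝ)^n := fun n => by positivity
  have hr : ∀ k : ℕ, ((1/2:ℝ)^k) = (2:ℝ) ^ (-(k:ℝ)) := by
    intro k
    rw [Real.rpow_neg h2.le, Real.rpow_natCast, one_div, inv_pow]
  -- μ {x} = 0
  have hx0 : μ {x} = 0 := by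
    have hb : ∀ n : ℕ, μ {x} ≤ ENNReal.ofReal (C₀ * ((1/2:ℝ)^D)^n) := by
      intro n
      have hsub : ({x} : Set X) ⊆ Metric.ball x ((1/2:ℝ)^n) :=
        Set.singleton_subset_iff.2 (Metric.mem_ball_self (hrpos n))
      refine le_trans (measure_mono hsub) (le_trans (hμ x _ (hrpos n)) ?_)
      have : ((1/2:ℝ)^n) ^ D = ((1/2:ℝ)^D)^n := by
        rw [← Real.rpow_natCast (1/2 : ℝ) n, ← Real.rpow_natCast ((1/2:ℝ)^D) n,
          ← Real.rpow_mul (by norm_num), ← Real.rpow_mul (by norm_num), mul_comm]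
      rw [this]
    have htend : Filter.Tendsto (fun n : ℕ => ENNReal.ofReal (C₀ * ((1/2:ℝ)^D)^n))
        Filter.atTop (nhds 0) := by
      have h1 : Filter.Tendsto (fun n : ℕ => C₀ * ((1/2:ℝ)^D)^n) Filter.atTop (nhds 0) := by
        have := tendsto_pow_atTop_nhds_zero_of_lt_one
          (le_of_lt (Real.rpow_pos_of_pos (by norm_num : (0:ℝ) < 1/2) D))
          (Real.rpow_lt_one (by norm_num : (0:ℝ) ≤ 1/2) (by norm_num) hD)
        simpa using this.const_mul C₀
      simpa using (ENNReal.tendsto_ofReal h1)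
    exact le_antisymm (ge_of_tendsto' htend hb) zero_le
  -- dyadic shells
  set S : ℕ → Set X := fun n => {y | (1/2:ℝ)^(n+1) < dist x y ∧ dist x y ≤ (1/2:ℝ)^n} with hS
  have hSm : ∀ n, MeasurableSet (S n) := by
    intro n
    have hm : Measurable fun y : X => dist x y := (continuous_const.dist continuous_id).measurable
    exact hm measurableSet_Ioc
  set c : ℕ → ℝ≥0∞ := fun n => ENNReal.ofReal (((1/2:ℝ)^(n+1)) ^ (-γ)) with hc
  -- a.e. pointwise bound
  have hae : (fun y => ENNReal.ofReal (dist x y ^ β)) ≤ᵐ[μ]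
      fun y => ∑' n, (S n).indicator (fun _ => c n) y := by
    have hne : ∀ᵐ y ∂μ, y ∉ ({x} : Set X) := measure_eq_zero_iff_ae_notMem.mp hx0
    filter_upwards [hne] with y hy
    have hd0 : 0 < dist x y := dist_pos.2 (fun h => hy (by simp [h.symm]))
    have hd1 : dist x y ≤ 1 := hdiam x y
    have hex : ∃ n : ℕ, (1/2:ℝ)^(n+1) < dist x y := by
      obtain ⟨n, hn⟩ := exists_pow_lt_of_lt_one hd0 (by norm_num : (1/2:ℝ) < 1)
      refine ⟨n, lt_of_le_of_lt ?_ hn⟩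
      exact pow_le_pow_of_le_one (by norm_num) (by norm_num) (Nat.le_succ n)
    obtain ⟨m, hml, hmu⟩ : ∃ m : ℕ, (1/2:ℝ)^(m+1) < dist x y ∧ dist x y ≤ (1/2:ℝ)^m := by
      refine ⟨Nat.find hex, Nat.find_spec hex, ?_⟩
      rcases Nat.eq_zero_or_pos (Nat.find hex) with h0 | h0
      · rw [h0]; simpa using hd1
      · obtain ⟨k, hk⟩ := Nat.exists_eq_succ_of_ne_zero h0.ne'
        have hmin := Nat.find_min hex (m := k) (by omega)
        rw [hk]
        simpa using not_lt.mp hmin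
    have hymem : y ∈ S m := ⟨hml, hmu⟩
    have hle : ENNReal.ofReal (dist x y ^ β) ≤ c m := by
      refine ENNReal.ofReal_le_ofReal ?_
      rcases le_or_gt 0 β with hβ | hβ
      · calc dist x y ^ β ≤ 1 := Real.rpow_le_one hd0.le hd1 hβ
          _ ≤ ((1/2:ℝ)^(m+1)) ^ (-γ) :=
            Real.one_le_rpow_of_pos_of_le_one_of_nonpos (hrpos (m+1))
              (pow_le_one₀ (by norm_num) (by norm_num)) (neg_nonpos.2 hγ0)
      · have hγβ : γ = -β := max_eq_left (by linarith)
        rw [hγβ, neg_neg]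
        exact Real.rpow_le_rpow_of_nonpos (hrpos (m+1)) hml.le hβ.le
    calc ENNReal.ofReal (dist x y ^ β) ≤ c m := hle
      _ = (S m).indicator (fun _ => c m) y := (Set.indicator_of_mem hymem fun _ => c m).symm
      _ ≤ ∑' n, (S n).indicator (fun _ => c n) y := ENNReal.le_tsum m
  calc ∫⁻ y, ENNReal.ofReal (dist x y ^ β) ∂μ
      ≤ ∫⁻ y, ∑' n, (S n).indicator (fun _ => c n) y ∂μ := lintegral_mono_ae hae
    _ = ∑' n, ∫⁻ y, (S n).indicator (fun _ => c n) y ∂μ :=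
        lintegral_tsum (fun n => ((measurable_const.indicator (hSm n)).aemeasurable))
    _ = ∑' n, c n * μ (S n) := by
        refine tsum_congr fun n => ?_
        rw [lintegral_indicator_const (hSm n)]
    _ ≤ ∑' n, ENNReal.ofReal (C₀ * 2 ^ (D + γ)) * (ENNReal.ofReal ((2:ℝ)^(γ-D)))^n := by
        refine ENNReal.tsum_le_tsum fun n => ?_
        have hSsub : S n ⊆ Metric.ball x (2 * (1/2:ℝ)^n) := by
          intro y hy
          have h1 : dist x y ≤ (1/2:ℝ)^n := hy.2
          have h2' : (0:ℝ) < (1/2:ℝ)^n := hrpos n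
          have : dist y x < 2 * (1/2:ℝ)^n := by rw [dist_comm]; linarith
          exact this
        have hμS : μ (S n) ≤ ENNReal.ofReal (C₀ * (2 * (1/2:ℝ)^n) ^ D) :=
          le_trans (measure_mono hSsub) (hμ x _ (by positivity))
        calc c n * μ (S n) ≤ c n * ENNReal.ofReal (C₀ * (2 * (1/2:ℝ)^n) ^ D) := by
              exact mul_le_mul_right hμS _
          _ = ENNReal.ofReal (((1/2:ℝ)^(n+1)) ^ (-γ) * (C₀ * (2 * (1/2:ℝ)^n) ^ D)) := by
              rw [hc, ← ENNReal.ofReal_mul (by positivity)]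
          _ = ENNReal.ofReal ((C₀ * 2 ^ (D + γ)) * ((2:ℝ)^(γ-D))^n) := by
              congr 1
              rw [hr (n+1), hr n]
              rw [← Real.rpow_natCast ((2:ℝ)^(γ-D)) n, ← Real.rpow_mul h2.le,
                ← Real.rpow_mul h2.le]
              rw [show (2:ℝ) * (2:ℝ) ^ (-(n:ℝ)) = (2:ℝ) ^ (1 + -(n:ℝ)) from by
                rw [Real.rpow_add h2, Real.rpow_one], ← Real.rpow_mul h2.le]
              have e1 : ∀ u v : ℝ, (2:ℝ)^u * (C₀ * (2:ℝ)^v) = C₀ * (2:ℝ)^(u+v) := fun u v => by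
                rw [Real.rpow_add h2]; ring
              have e2 : ∀ u v : ℝ, C₀ * (2:ℝ)^u * (2:ℝ)^v = C₀ * (2:ℝ)^(u+v) := fun u v => by
                rw [Real.rpow_add h2]; ring
              rw [e1, e2]
              congr 1
              push_cast
              ring
          _ = ENNReal.ofReal (C₀ * 2 ^ (D + γ)) * (ENNReal.ofReal ((2:ℝ)^(γ-D)))^n := by
              rw [ENNReal.ofReal_mul (by positivity), ENNReal.ofReal_pow (by positivity)]
    _ = ENNReal.ofReal (C₀ * 2 ^ (D + γ)) * (1 - ENNReal.ofReal ((2:ℝ)^(γ-D)))⁻¹ := by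
        rw [ENNReal.tsum_mul_left, ENNReal.tsum_geometric]


/-- Corollary 3.4: the embedding `W^{s,p} ⊂ L^∞` when `s(D+1) > D/p`, formulated for an
abstract kernel satisfying `|K(x,y)| ≤ C₁ d(x,y)^(s(D+1)-D)`. -/
theorem sobolev_embedding_Linfty {X : Type*} [MetricSpace X] [MeasurableSpace X] [BorelSpace X]
    (hdiam : ∀ x y : X, dist x y ≤ 1)
    (D C₀ p s C₁ : ℝ) (hD : 0 < D) (hC₀ : 0 < C₀) (hp1 : 1 < p)
    (hs0 : 0 < s) (hs1 : s < 1) (hsp : D / p < s * (D + 1)) (hC₁ : 0 < C₁) :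
    ∃ C : ℝ, 0 < C ∧
      ∀ μ : Measure X,
        (∀ (x : X) (r : ℝ), 0 < r → μ (Metric.ball x r) ≤ ENNReal.ofReal (C₀ * r ^ D)) →
        ∀ K : X × X → ℝ, Measurable K →
          (∀ x y : X, |K (x, y)| ≤ C₁ * dist x y ^ (s * (D + 1) - D)) →
        ∀ f : X → ℝ, MemLp f (ENNReal.ofReal p) μ →
        ∀ x : X,
          ∫ y, |K (x, y) * f y| ∂μ ≤ C * (eLpNorm f (ENNReal.ofReal p) μ).toReal := by
  have hp0 : 0 < p := lt_trans one_pos hp1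
  have hpq : p.HolderConjugate (p / (p - 1)) := Real.HolderConjugate.conjExponent hp1
  set q : ℝ := p / (p - 1) with hqdef
  have hq0 : 0 < q := hpq.symm.pos
  set η : ℝ := s * (D + 1) - D with hη
  set β : ℝ := η * q with hβdef
  have hγD : max (-β) 0 < D := by
    refine max_lt ?_ hD
    have h1 : -β = q * (D - s * (D + 1)) := by rw [hβdef, hη]; ring
    have h2 : D - s * (D + 1) < D - D / p := by linarith
    have h3 : q * (D - D / p) = D := by
      have h4 : p ≠ 0 := hp0.ne'
      have h5 : p - 1 ≠ 0 := by intro h; rw [sub_eq_zero] at h; simp [h] at hp1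
      rw [hqdef]
      field_simp
    calc -β = q * (D - s * (D + 1)) := h1
      _ < q * (D - D / p) := mul_lt_mul_of_pos_left h2 hq0
      _ = D := h3
  set A : ℝ≥0∞ := ENNReal.ofReal (C₀ * 2 ^ (D + max (-β) 0)) *
      (1 - ENNReal.ofReal ((2:ℝ) ^ (max (-β) 0 - D)))⁻¹ with hA
  have hAtop : A ≠ ⊤ := by
    refine ENNReal.mul_ne_top ENNReal.ofReal_ne_top ?_
    rw [Ne, ENNReal.inv_eq_top, tsub_eq_zero_iff_le, not_le]
    calc ENNReal.ofReal ((2:ℝ) ^ (max (-β) 0 - D)) < ENNReal.ofReal 1 := by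
          rw [ENNReal.ofReal_lt_ofReal_iff one_pos]
          exact Real.rpow_lt_one_of_one_lt_of_neg one_lt_two (by linarith)
      _ = 1 := ENNReal.ofReal_one
  set B : ℝ≥0∞ := (ENNReal.ofReal (C₁ ^ q) * A) ^ (1/q) with hB
  have hBtop : B ≠ ⊤ :=
    ENNReal.rpow_ne_top_of_nonneg (by positivity) (ENNReal.mul_ne_top ENNReal.ofReal_ne_top hAtop)
  refine ⟨B.toReal + 1, by positivity, ?_⟩
  intro μ hμ K hKm hKb f hf x
  set P : ℝ≥0∞ := ENNReal.ofReal p with hP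
  have hKxm : Measurable fun y : X => K (x, y) := hKm.comp measurable_prodMk_left
  have hsm : AEStronglyMeasurable (fun y => ‖K (x, y) * f y‖) μ :=
    ((hKxm.aestronglyMeasurable.mul hf.1).norm)
  have habs : ∀ y : X, |K (x, y) * f y| = ‖K (x, y) * f y‖ := fun y => (Real.norm_eq_abs _).symm
  simp only [habs]
  rw [integral_eq_lintegral_of_nonneg_ae (Filter.Eventually.of_forall fun y => norm_nonneg _) hsm]
  -- Hölder
  have hFmeas : AEMeasurable (fun y => ENNReal.ofReal ‖K (x, y)‖) μ :=
    (hKxm.norm.ennreal_ofReal).aemeasurable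
  have hGmeas : AEMeasurable (fun y => ENNReal.ofReal ‖f y‖) μ :=
    hf.1.norm.aemeasurable.ennreal_ofReal
  have hHold := ENNReal.lintegral_mul_le_Lp_mul_Lq μ hpq.symm hFmeas hGmeas
  have heq : (∫⁻ y, ENNReal.ofReal ‖K (x, y) * f y‖ ∂μ) =
      ∫⁻ y, ((fun y => ENNReal.ofReal ‖K (x, y)‖) * fun y => ENNReal.ofReal ‖f y‖) y ∂μ := by
    refine lintegral_congr fun y => ?_
    simp only [Pi.mul_apply]
    rw [norm_mul, ENNReal.ofReal_mul (norm_nonneg _)]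
  -- `G`-factor is the Lp norm
  have hsnorm : (∫⁻ y, (ENNReal.ofReal ‖f y‖) ^ p ∂μ) ^ (1/p) = eLpNorm f P μ := by
    rw [eLpNorm_eq_lintegral_rpow_enorm_toReal (by
        simp only [hP, Ne, ENNReal.ofReal_eq_zero, not_le]; exact hp0) (by simp [hP])]
    simp_rw [ofReal_norm_eq_enorm]
    rw [hP, ENNReal.toReal_ofReal hp0.le]
  -- `F`-factor bound
  have hFint : (∫⁻ y, (ENNReal.ofReal ‖K (x, y)‖) ^ q ∂μ) ≤ ENNReal.ofReal (C₁ ^ q) * A := by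
    have hpt : ∀ y, (ENNReal.ofReal ‖K (x, y)‖) ^ q ≤
        ENNReal.ofReal (C₁ ^ q) * ENNReal.ofReal (dist x y ^ β) := by
      intro y
      have h1 : (ENNReal.ofReal ‖K (x, y)‖) ^ q ≤
          (ENNReal.ofReal (C₁ * dist x y ^ η)) ^ q := by
        refine ENNReal.rpow_le_rpow (ENNReal.ofReal_le_ofReal ?_) hq0.le
        rw [Real.norm_eq_abs]; exact hKb x y
      have h2 : (ENNReal.ofReal (C₁ * dist x y ^ η)) ^ q =
          ENNReal.ofReal ((C₁ * dist x y ^ η) ^ q) :=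
        ENNReal.ofReal_rpow_of_nonneg (by positivity) hq0.le
      have h3 : (C₁ * dist x y ^ η) ^ q = C₁ ^ q * dist x y ^ β := by
        rw [Real.mul_rpow hC₁.le (Real.rpow_nonneg dist_nonneg _), hβdef,
          Real.rpow_mul dist_nonneg]
      refine le_trans h1 (le_of_eq ?_)
      rw [h2, h3, ENNReal.ofReal_mul (by positivity)]
    calc (∫⁻ y, (ENNReal.ofReal ‖K (x, y)‖) ^ q ∂μ)
        ≤ ∫⁻ y, ENNReal.ofReal (C₁ ^ q) * ENNReal.ofReal (dist x y ^ β) ∂μ :=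
          lintegral_mono hpt
      _ = ENNReal.ofReal (C₁ ^ q) * ∫⁻ y, ENNReal.ofReal (dist x y ^ β) ∂μ :=
          lintegral_const_mul' _ _ ENNReal.ofReal_ne_top
      _ ≤ ENNReal.ofReal (C₁ ^ q) * A :=
          mul_le_mul_right (riesz_lintegral_bound hdiam hD hC₀ β hγD μ hμ x) _
  have hchain : (∫⁻ y, ENNReal.ofReal ‖K (x, y) * f y‖ ∂μ) ≤ B * eLpNorm f P μ := by
    rw [heq]
    refine le_trans hHold ?_
    rw [hsnorm]
    exact mul_le_mul_left (ENNReal.rpow_le_rpow hFint (by positivity)) _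
  have hfin : B * eLpNorm f P μ ≠ ⊤ := ENNReal.mul_ne_top hBtop hf.2.ne
  calc (∫⁻ y, ENNReal.ofReal ‖K (x, y) * f y‖ ∂μ).toReal
      ≤ (B * eLpNorm f P μ).toReal := ENNReal.toReal_mono hfin hchain
    _ = B.toReal * (eLpNorm f P μ).toReal := ENNReal.toReal_mul
    _ ≤ (B.toReal + 1) * (eLpNorm f P μ).toReal := by
        have h0 : (0:ℝ) ≤ (eLpNorm f P μ).toReal := ENNReal.toReal_nonneg
        nlinarith
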